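/- Let s and c be real numbers with s < 0, c > 1, and c > −1/s. Then (1/(2π)) · ∫_ℝ ζ(−s·(c + i v)) · Γ(c + i v) · ζ(c + i v) dv = ∑_{j=1}^∞ 1/( e^{j^{−s}} − 1 ). -/

import Mathlib

open MeasureTheory Set Filter

namespace Stmt18

noncomputable def q (s : ℝ) (j : ℕ) : ℝ := ((j : ℝ) + 1) ^ (-s)

noncomputable def pp (s : ℝ) (i : ℕ × ℕ) : ℝ := ((i.2 : ℝ) + 1) * q s i.1

noncomputable def F (s : ℝ) (t : ℝ) : ℝ := ∑' i : ℕ × ℕ, Real.exp (-(pp s i) * t)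

noncomputable def f (s : ℝ) (t : ℝ) : ℂ := ((F s t : ℝ) : ℂ)

lemma q_pos (s : ℝ) (j : ℕ) : 0 < q s j := Real.rpow_pos_of_pos (by positivity) _

lemma pp_pos (s : ℝ) (i : ℕ × ℕ) : 0 < pp s i := mul_pos (by positivity) (q_pos s i.1)

lemma exp_sub_one_pos {x : ℝ} (hx : 0 < x) : 0 < Real.exp x - 1 := by
  have := Real.add_one_le_exp x
  linarith

lemma one_div_exp_sub_one_le {x : ℝ} (hx : 0 < x) {k : ℕ} (hk : 1 ≤ k) :
    1 / (Real.exp x - 1) ≤ (k.factorial : ℝ) / x ^ k := by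
  have h1 : 1 + x ^ k / (k.factorial : ℝ) ≤ Real.exp x := by
    have hsum := Real.sum_le_exp_of_nonneg hx.le (k + 1)
    rw [Finset.sum_range_succ] at hsum
    have h0 : (1 : ℝ) ≤ ∑ i ∈ Finset.range k, x ^ i / (i.factorial : ℝ) := by
      have := Finset.single_le_sum (f := fun i => x ^ i / (i.factorial : ℝ))
        (fun i _ => by positivity) (Finset.mem_range.mpr hk)
      simpa using this
    linarith
  have hx' : 0 < x ^ k / (k.factorial : ℝ) := by positivity
  have h2 : 1 / (Real.exp x - 1) ≤ 1 / (x ^ k / (k.factorial : ℝ)) :=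
    one_div_le_one_div_of_le hx' (by linarith)
  calc 1 / (Real.exp x - 1) ≤ 1 / (x ^ k / (k.factorial : ℝ)) := h2
    _ = (k.factorial : ℝ) / x ^ k := one_div_div _ _

lemma summable_rpow_add_one {r : ℝ} (hr : r < -1) :
    Summable fun j : ℕ => ((j : ℝ) + 1) ^ r := by
  have h := (summable_nat_add_iff (f := fun n : ℕ => (n : ℝ) ^ r) 1).mpr
    (Real.summable_nat_rpow.mpr hr)
  refine h.congr fun n => ?_
  push_cast
  rfl

lemma summable_one_div_exp_q {s : ℝ} (hs : s < 0) {t : ℝ} (ht : 0 < t) :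
    Summable fun j : ℕ => 1 / (Real.exp (q s j * t) - 1) := by
  set k : ℕ := ⌈1 / (-s)⌉₊ + 1 with hkdef
  have hk1 : 1 ≤ k := Nat.le_add_left 1 _
  have hks : 1 / (-s) < (k : ℝ) := by
    have := Nat.le_ceil (1 / (-s))
    push_cast [hkdef]
    linarith
  have hsk : s * k < -1 := by
    have hns : 0 < -s := by linarith
    have := (div_lt_iff₀ hns).mp hks
    nlinarith
  refine Summable.of_nonneg_of_le
    (fun j => le_of_lt (by
      have := exp_sub_one_pos (mul_pos (q_pos s j) ht); positivity)) (fun j => ?_)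
    ((summable_rpow_add_one hsk).mul_left ((k.factorial : ℝ) / t ^ k))
  · 
    have hq := q_pos s j
    have hqt : 0 < q s j * t := mul_pos hq ht
    have h1 := one_div_exp_sub_one_le hqt hk1
    have h2 : (q s j * t) ^ k = q s j ^ k * t ^ k := mul_pow _ _ _
    have h3 : q s j ^ k = ((j : ℝ) + 1) ^ (-(s * k)) := by
      rw [q, ← Real.rpow_natCast (((j : ℝ) + 1) ^ (-s)) k, ← Real.rpow_mul (by positivity)]
      ring_nf
    have h4 : ((j : ℝ) + 1) ^ (-(s * k)) * ((j : ℝ) + 1) ^ (s * k) = 1 := by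
      rw [← Real.rpow_add (by positivity)]
      simp
    calc 1 / (Real.exp (q s j * t) - 1) ≤ (k.factorial : ℝ) / (q s j * t) ^ k := h1
      _ = ((k.factorial : ℝ) / t ^ k) * ((j : ℝ) + 1) ^ (s * k) := by
          rw [h2, h3, Real.rpow_neg (by positivity), ← div_div, div_inv_eq_mul,
            mul_div_right_comm]

lemma inner_hasSum {a : ℝ} (ha : 0 < a) :
    HasSum (fun n : ℕ => Real.exp (-(((n : ℝ) + 1) * a))) (1 / (Real.exp a - 1)) := by
  have hr0 : (0:ℝ) ≤ Real.exp (-a) := (Real.exp_pos _).le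
  have hr1 : Real.exp (-a) < 1 := Real.exp_lt_one_iff.mpr (by linarith)
  have h := (hasSum_geometric_of_lt_one hr0 hr1).mul_left (Real.exp (-a))
  have he : Real.exp a - 1 ≠ 0 := (exp_sub_one_pos ha).ne'
  have hea : Real.exp a ≠ 0 := (Real.exp_pos a).ne'
  have hval : 1 / (Real.exp a - 1) = Real.exp (-a) * (1 - Real.exp (-a))⁻¹ := by
    rw [Real.exp_neg]
    rw [show (1 - (Real.exp a)⁻¹) = (Real.exp a - 1) / Real.exp a by field_simp]
    field_simp
  rw [hval]
  refine h.congr_fun fun n => ?_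
  rw [← Real.exp_nat_mul, ← Real.exp_add]
  congr 1
  ring

lemma summable_exp_pp {s : ℝ} (hs : s < 0) {t : ℝ} (ht : 0 < t) :
    Summable fun i : ℕ × ℕ => Real.exp (-(pp s i) * t) := by
  rw [summable_prod_of_nonneg (fun i => (Real.exp_pos _).le)]
  constructor
  · intro j
    have h := (inner_hasSum (mul_pos (q_pos s j) ht)).summable
    refine h.congr fun n => ?_
    congr 1
    simp only [pp]
    ring
  · have hsum := summable_one_div_exp_q hs ht
    refine hsum.congr fun j => ?_
    have h := inner_hasSum (mul_pos (q_pos s j) ht)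
    have h2 : (fun n : ℕ => Real.exp (-(((n : ℝ) + 1) * (q s j * t)))) =
        fun n : ℕ => Real.exp (-(pp s (j, n)) * t) := by
      funext n
      congr 1
      simp only [pp]
      ring
    rw [← h.tsum_eq, h2]

lemma inner_hasSum_pp {s : ℝ} (hs : s < 0) {t : ℝ} (ht : 0 < t) (j : ℕ) :
    HasSum (fun n : ℕ => Real.exp (-(pp s (j, n)) * t)) (1 / (Real.exp (q s j * t) - 1)) := by
  have h := inner_hasSum (mul_pos (q_pos s j) ht)
  refine h.congr_fun fun n => ?_
  congr 1
  simp only [pp]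
  ring

lemma F_eq {s : ℝ} (hs : s < 0) {t : ℝ} (ht : 0 < t) :
    F s t = ∑' j : ℕ, 1 / (Real.exp (q s j * t) - 1) := by
  rw [F, Summable.tsum_prod' (summable_exp_pp hs ht) (fun j => (inner_hasSum_pp hs ht j).summable)]
  exact tsum_congr fun j => (inner_hasSum_pp hs ht j).tsum_eq

lemma F_nonneg (s t : ℝ) : 0 ≤ F s t :=
  tsum_nonneg fun i => (Real.exp_pos _).le

lemma summable_one_div_pp {s c : ℝ} (hs : s < 0) (hc1 : 1 < c) (hsc : 1 < -s * c) :
    Summable fun i : ℕ × ℕ => 1 / pp s i ^ c := by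
  have h1 : Summable fun j : ℕ => ((j : ℝ) + 1) ^ (s * c) :=
    summable_rpow_add_one (by nlinarith)
  have h2 : Summable fun n : ℕ => ((n : ℝ) + 1) ^ (-c) :=
    summable_rpow_add_one (by linarith)
  have h := h1.mul_of_nonneg h2 (fun j => (Real.rpow_pos_of_pos (by positivity) _).le)
    (fun n => (Real.rpow_pos_of_pos (by positivity) _).le)
  refine h.congr fun i => ?_
  obtain ⟨j, n⟩ := i
  show ((j : ℝ) + 1) ^ (s * c) * ((n : ℝ) + 1) ^ (-c) = 1 / pp s (j, n) ^ c
  have hq := q_pos s j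
  have hqc : q s j ^ c = ((j : ℝ) + 1) ^ (-s * c) := by
    rw [q, ← Real.rpow_mul (by positivity)]
  rw [pp, Real.mul_rpow (by positivity) hq.le, hqc, one_div, mul_inv,
    ← Real.rpow_neg (by positivity), ← Real.rpow_neg (by positivity)]
  rw [mul_comm]
  congr 1
  ring

lemma continuousAt_F {s : ℝ} (hs : s < 0) {x : ℝ} (hx : 0 < x) :
    ContinuousAt (F s) x := by
  have hsum := summable_exp_pp hs (half_pos hx)
  have hcont : ContinuousOn (F s) (Ici (x / 2)) := by
    refine continuousOn_tsum (fun i => (Continuous.rexp (by fun_prop)).continuousOn)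
      hsum fun i t htx => ?_
    rw [Real.norm_eq_abs, abs_of_pos (Real.exp_pos _)]
    apply Real.exp_le_exp.mpr
    have hp := pp_pos s i
    nlinarith [mem_Ici.mp htx]
  exact hcont.continuousAt (Ici_mem_nhds (half_lt_self hx))

lemma norm_one_div_cpow {x : ℝ} (hx : 0 < x) (z : ℂ) :
    ‖1 / ((x : ℂ)) ^ z‖ = x ^ (-z.re) := by
  rw [norm_div, norm_one, Complex.norm_cpow_eq_rpow_re_of_pos hx,
    Real.rpow_neg hx.le, one_div]

lemma summable_norm_one_div_nat_cpow {z : ℂ} (hz : 1 < z.re) :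
    Summable fun n : ℕ => ‖1 / ((n : ℂ) + 1) ^ z‖ := by
  refine (summable_rpow_add_one (by linarith : -z.re < -1)).congr fun n => ?_
  have h : ((n : ℂ) + 1) = ((((n : ℝ) + 1) : ℝ) : ℂ) := by push_cast; rfl
  rw [h, norm_one_div_cpow (by positivity)]

lemma hasSum_zeta_aux {z : ℂ} (hz : 1 < z.re) :
    HasSum (fun n : ℕ => 1 / ((n : ℂ) + 1) ^ z) (riemannZeta z) := by
  rw [zeta_eq_tsum_one_div_nat_add_one_cpow hz]
  exact ((summable_norm_one_div_nat_cpow hz).of_norm).hasSum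

lemma zeta_norm_le {z : ℂ} (hz : 1 < z.re) :
    ‖riemannZeta z‖ ≤ ∑' n : ℕ, ((n : ℝ) + 1) ^ (-z.re) := by
  rw [zeta_eq_tsum_one_div_nat_add_one_cpow hz]
  refine (norm_tsum_le_tsum_norm (summable_norm_one_div_nat_cpow hz)).trans_eq ?_
  refine tsum_congr fun n => ?_
  have h : ((n : ℂ) + 1) = ((((n : ℝ) + 1) : ℝ) : ℂ) := by push_cast; rfl
  rw [h, norm_one_div_cpow (by positivity)]

lemma Gamma_norm_le {z : ℂ} (hz : 0 < z.re) :
    ‖Complex.Gamma z‖ ≤ Real.Gamma z.re := by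
  rw [Complex.Gamma_eq_integral hz, Real.Gamma_eq_integral hz, Complex.GammaIntegral]
  refine (norm_integral_le_integral_norm _).trans_eq ?_
  refine setIntegral_congr_fun measurableSet_Ioi fun x hx => ?_
  rw [norm_mul, Complex.norm_real, Real.norm_eq_abs, abs_of_pos (Real.exp_pos _),
    Complex.norm_cpow_eq_rpow_re_of_pos hx]
  simp

lemma mellin_f_eq {s c : ℝ} (hs : s < 0) (hc1 : 1 < c) (hsc : 1 < -s * c) (v : ℝ) :
    mellin (f s) ((c : ℂ) + v * Complex.I) =
      riemannZeta (-(s : ℂ) * ((c : ℂ) + v * Complex.I)) *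
        Complex.Gamma ((c : ℂ) + v * Complex.I) *
        riemannZeta ((c : ℂ) + v * Complex.I) := by
  set w : ℂ := (c : ℂ) + v * Complex.I with hw
  have hwre : w.re = c := by simp [hw]
  have hmre : (-(s : ℂ) * w).re = -s * c := by simp [hw, Complex.mul_re]
  have hmel : HasSum (fun i : ℕ × ℕ => Complex.Gamma w * 1 / ((pp s i : ℝ) : ℂ) ^ w)
      (mellin (f s) w) := by
    refine hasSum_mellin (fun i => Or.inr (pp_pos s i)) (by rw [hwre]; linarith)
      (fun t ht => ?_) ?_
    · simp only [one_mul]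
      exact Complex.hasSum_ofReal.mpr (summable_exp_pp hs ht).hasSum
    · simp only [norm_one, hwre]
      exact summable_one_div_pp hs hc1 hsc
  have hA : HasSum (fun j : ℕ => 1 / ((j : ℂ) + 1) ^ (-(s : ℂ) * w))
      (riemannZeta (-(s : ℂ) * w)) := hasSum_zeta_aux (by rw [hmre]; exact hsc)
  have hB : HasSum (fun n : ℕ => 1 / ((n : ℂ) + 1) ^ w) (riemannZeta w) :=
    hasSum_zeta_aux (by rw [hwre]; exact hc1)
  have hnA := summable_norm_one_div_nat_cpow (z := -(s : ℂ) * w) (by rw [hmre]; exact hsc)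
  have hnB := summable_norm_one_div_nat_cpow (z := w) (by rw [hwre]; exact hc1)
  have hprod : HasSum
      (fun i : ℕ × ℕ => (1 / ((i.1 : ℂ) + 1) ^ (-(s : ℂ) * w)) * (1 / ((i.2 : ℂ) + 1) ^ w))
      (riemannZeta (-(s : ℂ) * w) * riemannZeta w) := by
    have hsummable := summable_mul_of_summable_norm hnA hnB
    have heq := tsum_mul_tsum_of_summable_norm hnA hnB
    rw [hA.tsum_eq, hB.tsum_eq] at heq
    rw [heq]
    exact hsummable.hasSum
  have htermeq : (fun i : ℕ × ℕ => Complex.Gamma w *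
        ((1 / ((i.1 : ℂ) + 1) ^ (-(s : ℂ) * w)) * (1 / ((i.2 : ℂ) + 1) ^ w)))
      = fun i : ℕ × ℕ => Complex.Gamma w * 1 / ((pp s i : ℝ) : ℂ) ^ w := by
    funext i
    obtain ⟨j, n⟩ := i
    have hppc : ((pp s (j, n) : ℝ) : ℂ) ^ w
        = ((n : ℂ) + 1) ^ w * ((j : ℂ) + 1) ^ (-(s : ℂ) * w) := by
      have hlog : (Complex.log ((((j : ℝ) + 1) : ℝ) : ℂ) * (-(s : ℂ))).im = 0 := by
        rw [← Complex.ofReal_log (by positivity), ← Complex.ofReal_neg, ← Complex.ofReal_mul]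
        simp
      rw [pp, q, Complex.ofReal_mul, Complex.mul_cpow_ofReal_nonneg (by positivity)
        (Real.rpow_pos_of_pos (by positivity) _).le, Complex.ofReal_cpow (by positivity),
        Complex.ofReal_neg,
        ← Complex.cpow_mul _ (by rw [hlog]; linarith [Real.pi_pos]) (by rw [hlog]; exact Real.pi_pos.le)]
      push_cast
      ring_nf
    rw [hppc]
    have h1 : ((n : ℂ) + 1) ^ w ≠ 0 := by
      simp only [Ne, Complex.cpow_eq_zero_iff, not_and_or]
      exact Or.inl (Nat.cast_add_one_ne_zero n)
    have h2 : ((j : ℂ) + 1) ^ (-(s : ℂ) * w) ≠ 0 := by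
      simp only [Ne, Complex.cpow_eq_zero_iff, not_and_or]
      exact Or.inl (Nat.cast_add_one_ne_zero j)
    field_simp
  have h2 := hprod.mul_left (Complex.Gamma w)
  rw [htermeq] at h2
  rw [hmel.unique h2]
  ring

lemma mellin_conv {s c : ℝ} (hs : s < 0) (hc1 : 1 < c) (hsc : 1 < -s * c) :
    MellinConvergent (f s) c := by
  have hc0 : (0:ℝ) < c := by linarith
  constructor
  · refine ContinuousOn.aestronglyMeasurable (fun t ht => ?_) measurableSet_Ioi
    have h1 : ContinuousAt (fun t : ℝ => ((t : ℂ)) ^ ((c : ℂ) - 1)) t :=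
      Complex.continuousAt_ofReal_cpow_const t _ (Or.inr (ne_of_gt ht))
    have h2 : ContinuousAt (f s) t :=
      Complex.continuous_ofReal.continuousAt.comp (continuousAt_F hs ht)
    exact (h1.smul h2).continuousWithinAt
  · rw [hasFiniteIntegral_iff_norm]
    have hmeasb : ∀ i : ℕ × ℕ, AEMeasurable
        (fun t : ℝ => ENNReal.ofReal (t ^ (c - 1) * Real.exp (-(pp s i) * t)))
        (volume.restrict (Ioi 0)) := by
      intro i
      refine ENNReal.measurable_ofReal.comp_aemeasurable ?_
      refine ContinuousOn.aemeasurable ?_ measurableSet_Ioi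
      refine ContinuousOn.mul ?_ (Continuous.continuousOn (by fun_prop))
      intro t ht
      exact (continuousWithinAt_id.rpow_const (Or.inl (ne_of_gt ht)))
    have key : ∫⁻ t : ℝ in Ioi 0, ENNReal.ofReal ‖(t : ℂ) ^ ((c : ℂ) - 1) • f s t‖ =
        ∑' i : ℕ × ℕ, ∫⁻ t : ℝ in Ioi 0,
          ENNReal.ofReal (t ^ (c - 1) * Real.exp (-(pp s i) * t)) := by
      rw [← lintegral_tsum hmeasb]
      refine setLIntegral_congr_fun_ae measurableSet_Ioi (ae_of_all _ fun t ht => ?_)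
      have hsum_t := summable_exp_pp hs ht
      have hnorm : ‖(t : ℂ) ^ ((c : ℂ) - 1) • f s t‖ = t ^ (c - 1) * F s t := by
        rw [norm_smul, Complex.norm_cpow_eq_rpow_re_of_pos ht]
        simp only [Complex.sub_re, Complex.ofReal_re, Complex.one_re]
        rw [f, Complex.norm_real, Real.norm_eq_abs, abs_of_nonneg (F_nonneg s t)]
      rw [hnorm, F, ← tsum_mul_left, ENNReal.ofReal_tsum_of_nonneg
        (fun i => mul_nonneg (Real.rpow_nonneg (le_of_lt ht) _) (Real.exp_pos _).le)
        (hsum_t.mul_left _)]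
    rw [key]
    have heval : ∀ i : ℕ × ℕ, ∫⁻ t : ℝ in Ioi 0,
        ENNReal.ofReal (t ^ (c - 1) * Real.exp (-(pp s i) * t))
        = ENNReal.ofReal ((1 / pp s i) ^ c * Real.Gamma c) := by
      intro i
      have hp := pp_pos s i
      have hint : IntegrableOn (fun t : ℝ => t ^ (c - 1) * Real.exp (-(pp s i) * t)) (Ioi 0) := by
        have h2 := (integrableOn_Ioi_comp_mul_left_iff
          (fun x : ℝ => Real.exp (-x) * x ^ (c - 1)) 0 hp).mpr
          (by rw [mul_zero]; exact Real.GammaIntegral_convergent hc0)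
        have h3 : IntegrableOn
            (fun x : ℝ => (pp s i ^ (c - 1))⁻¹ * (Real.exp (-(pp s i * x)) * (pp s i * x) ^ (c - 1)))
            (Ioi 0) := h2.const_mul ((pp s i ^ (c - 1))⁻¹)
        refine IntegrableOn.congr_fun h3 (fun t ht => ?_) measurableSet_Ioi
        have htp : (0:ℝ) < t := ht
        have hppc1 : (0:ℝ) < pp s i ^ (c - 1) := Real.rpow_pos_of_pos hp _
        show (pp s i ^ (c - 1))⁻¹ * (Real.exp (-(pp s i * t)) * (pp s i * t) ^ (c - 1)) = _
        rw [Real.mul_rpow hp.le htp.le, neg_mul]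
        field_simp
      rw [← ofReal_integral_eq_lintegral_ofReal hint
        ((ae_restrict_iff' measurableSet_Ioi).mpr (ae_of_all _ fun t ht =>
          mul_nonneg (Real.rpow_nonneg (le_of_lt ht) _) (Real.exp_pos _).le))]
      congr 1
      rw [← Real.integral_rpow_mul_exp_neg_mul_Ioi hc0 hp]
      refine setIntegral_congr_fun measurableSet_Ioi fun t ht => ?_
      rw [neg_mul]
    rw [tsum_congr heval, ← ENNReal.ofReal_tsum_of_nonneg (fun i =>
      mul_nonneg (Real.rpow_nonneg (one_div_pos.mpr (pp_pos s i)).le _)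
        (Real.Gamma_pos_of_pos hc0).le) ?_]
    · exact ENNReal.ofReal_lt_top
    · refine ((summable_one_div_pp hs hc1 hsc).mul_right (Real.Gamma c)).congr fun i => ?_
      rw [Real.div_rpow zero_le_one (pp_pos s i).le, Real.one_rpow]

lemma Gamma_line_bound {c : ℝ} (hc1 : 1 < c) (v : ℝ) :
    ‖Complex.Gamma ((c : ℂ) + v * Complex.I)‖ ≤ Real.Gamma (c + 2) * (1 + v ^ 2)⁻¹ := by
  set w : ℂ := (c : ℂ) + v * Complex.I with hw
  have hwre : w.re = c := by simp [hw]
  have hw0 : w ≠ 0 := by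
    intro h
    rw [h] at hwre
    simp at hwre
    linarith
  have hw1 : w + 1 ≠ 0 := by
    intro h
    have h2 : (w + 1).re = c + 1 := by simp [hw]
    rw [h] at h2
    simp at h2
    linarith
  have key : Complex.Gamma w = Complex.Gamma (w + 2) / (w * (w + 1)) := by
    have e1 := Complex.Gamma_add_one w hw0
    have e2 := Complex.Gamma_add_one (w + 1) hw1
    rw [show w + 2 = w + 1 + 1 by ring, e2, e1]
    field_simp
  rw [key, norm_div, norm_mul]
  have h2 : ‖Complex.Gamma (w + 2)‖ ≤ Real.Gamma (c + 2) := by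
    have hre : (w + 2).re = c + 2 := by simp [hw]
    have := Gamma_norm_le (z := w + 2) (by rw [hre]; linarith)
    rwa [hre] at this
  have hnormsq : ‖w‖ ^ 2 = c ^ 2 + v ^ 2 := by
    rw [Complex.sq_norm, hw, Complex.normSq_add_mul_I]
  have hnormsq1 : ‖w + 1‖ ^ 2 = (c + 1) ^ 2 + v ^ 2 := by
    rw [Complex.sq_norm,
      show w + 1 = ((c + 1 : ℝ) : ℂ) + v * Complex.I by rw [hw]; push_cast; ring,
      Complex.normSq_add_mul_I]
  have hab : ‖w‖ ≤ ‖w + 1‖ := by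
    nlinarith [norm_nonneg w, norm_nonneg (w + 1)]
  have hle : 1 + v ^ 2 ≤ ‖w‖ * ‖w + 1‖ := by
    have h1 : 1 + v ^ 2 ≤ ‖w‖ * ‖w‖ := by nlinarith
    exact h1.trans (mul_le_mul_of_nonneg_left hab (norm_nonneg w))
  have h1v : (0:ℝ) < 1 + v ^ 2 := by positivity
  calc ‖Complex.Gamma (w + 2)‖ / (‖w‖ * ‖w + 1‖) ≤ Real.Gamma (c + 2) / (1 + v ^ 2) :=
        div_le_div₀ (Real.Gamma_pos_of_pos (by linarith)).le h2 h1v hle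
    _ = Real.Gamma (c + 2) * (1 + v ^ 2)⁻¹ := div_eq_mul_inv _ _

lemma integrable_G {s c : ℝ} (hs : s < 0) (hc1 : 1 < c) (hsc : 1 < -s * c) :
    Integrable (fun v : ℝ => riemannZeta (-(s : ℂ) * ((c : ℂ) + v * Complex.I)) *
      Complex.Gamma ((c : ℂ) + v * Complex.I) * riemannZeta ((c : ℂ) + v * Complex.I)) := by
  set Z1 : ℝ := ∑' n : ℕ, ((n : ℝ) + 1) ^ (-(-s * c)) with hZ1def
  set Z2 : ℝ := ∑' n : ℕ, ((n : ℝ) + 1) ^ (-c) with hZ2def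
  have hZ1 : 0 ≤ Z1 := tsum_nonneg fun n => (Real.rpow_pos_of_pos (by positivity) _).le
  have hZ2 : 0 ≤ Z2 := tsum_nonneg fun n => (Real.rpow_pos_of_pos (by positivity) _).le
  have hwc : Continuous fun v : ℝ => (c : ℂ) + (v : ℂ) * Complex.I :=
    continuous_const.add (Complex.continuous_ofReal.mul continuous_const)
  have hwre : ∀ v : ℝ, ((c : ℂ) + (v : ℂ) * Complex.I).re = c := fun v => by simp
  have hmre : ∀ v : ℝ, (-(s : ℂ) * ((c : ℂ) + (v : ℂ) * Complex.I)).re = -s * c :=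
    fun v => by simp [Complex.mul_re]
  have hcont : Continuous (fun v : ℝ => riemannZeta (-(s : ℂ) * ((c : ℂ) + v * Complex.I)) *
      Complex.Gamma ((c : ℂ) + v * Complex.I) * riemannZeta ((c : ℂ) + v * Complex.I)) := by
    refine Continuous.mul (Continuous.mul ?_ ?_) ?_
    · refine continuous_iff_continuousAt.mpr fun v => ?_
      refine (differentiableAt_riemannZeta ?_).continuousAt.comp
        ((continuous_const.mul hwc).continuousAt)
      intro h
      have h2 := congrArg Complex.re h
      rw [hmre v] at h2
      simp at h2
      linarith
    · refine continuous_iff_continuousAt.mpr fun v => ?_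
      refine (Complex.differentiableAt_Gamma _ fun m => ?_).continuousAt.comp hwc.continuousAt
      intro h
      have h2 := congrArg Complex.re h
      rw [hwre v] at h2
      simp at h2
      have hm : (0:ℝ) ≤ (m : ℝ) := Nat.cast_nonneg m
      linarith
    · refine continuous_iff_continuousAt.mpr fun v => ?_
      refine (differentiableAt_riemannZeta ?_).continuousAt.comp hwc.continuousAt
      intro h
      have h2 := congrArg Complex.re h
      rw [hwre v] at h2
      simp at h2
      linarith
  refine ((integrable_inv_one_add_sq).const_mul (Z1 * Real.Gamma (c + 2) * Z2)).mono'
    hcont.aestronglyMeasurable (ae_of_all _ fun v => ?_)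
  rw [norm_mul, norm_mul]
  have b1 : ‖riemannZeta (-(s : ℂ) * ((c : ℂ) + v * Complex.I))‖ ≤ Z1 := by
    have := zeta_norm_le (z := -(s : ℂ) * ((c : ℂ) + v * Complex.I)) (by rw [hmre v]; exact hsc)
    rwa [hmre v] at this
  have b2 : ‖riemannZeta ((c : ℂ) + v * Complex.I)‖ ≤ Z2 := by
    have := zeta_norm_le (z := (c : ℂ) + v * Complex.I) (by rw [hwre v]; exact hc1)
    rwa [hwre v] at this
  have b3 := Gamma_line_bound hc1 v
  have hG2 : (0:ℝ) ≤ Real.Gamma (c + 2) := (Real.Gamma_pos_of_pos (by linarith)).le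
  calc ‖riemannZeta (-(s : ℂ) * ((c : ℂ) + v * Complex.I))‖ *
        ‖Complex.Gamma ((c : ℂ) + v * Complex.I)‖ * ‖riemannZeta ((c : ℂ) + v * Complex.I)‖
      ≤ (Z1 * (Real.Gamma (c + 2) * (1 + v ^ 2)⁻¹)) * Z2 := by
        refine mul_le_mul (mul_le_mul b1 b3 (norm_nonneg _) hZ1) b2 (norm_nonneg _) ?_
        have : (0:ℝ) ≤ (1 + v ^ 2)⁻¹ := by positivity
        exact mul_nonneg hZ1 (mul_nonneg hG2 this)
    _ = Z1 * Real.Gamma (c + 2) * Z2 * (1 + v ^ 2)⁻¹ := by ring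

end Stmt18

open MeasureTheory

theorem stmt18 (s c : ℝ) (hs : s < 0) (hc1 : 1 < c) (hc2 : c > -1 / s) :
    (1 / (2 * (Real.pi : ℂ))) *
        ∫ v : ℝ,
          riemannZeta (-(s : ℂ) * (c + v * Complex.I)) * Complex.Gamma (c + v * Complex.I) *
            riemannZeta (c + v * Complex.I)
      = ∑' j : ℕ, 1 / (((Real.exp (((j : ℝ) + 1) ^ (-s)) : ℝ) : ℂ) - 1) := by
  have hns : (0:ℝ) < -s := by linarith
  have hsc : 1 < -s * c := by
    have h1 : -1 / s = 1 / (-s) := by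
      rw [neg_div, div_neg]
    rw [h1] at hc2
    have := (div_lt_iff₀ hns).mp hc2
    nlinarith
  have hMC : MellinConvergent (Stmt18.f s) c := Stmt18.mellin_conv hs hc1 hsc
  have hCont : ContinuousAt (Stmt18.f s) 1 :=
    Complex.continuous_ofReal.continuousAt.comp (Stmt18.continuousAt_F hs one_pos)
  have hVI : Complex.VerticalIntegrable (mellin (Stmt18.f s)) c :=
    (Stmt18.integrable_G hs hc1 hsc).congr
      (ae_of_all _ fun v => (Stmt18.mellin_f_eq hs hc1 hsc v).symm)
  have hinv := mellinInv_mellin_eq c (Stmt18.f s) one_pos hMC hVI hCont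
  rw [mellinInv] at hinv
  simp only [Complex.ofReal_one, Complex.one_cpow, one_smul] at hinv
  have hIeq : (∫ v : ℝ,
        riemannZeta (-(s : ℂ) * (c + v * Complex.I)) * Complex.Gamma (c + v * Complex.I) *
          riemannZeta (c + v * Complex.I))
      = ∫ y : ℝ, mellin (Stmt18.f s) ((c : ℂ) + y * Complex.I) :=
    integral_congr_ae (ae_of_all _ fun v => (Stmt18.mellin_f_eq hs hc1 hsc v).symm)
  rw [hIeq]
  have hsmul : (1 / (2 * Real.pi)) • (∫ y : ℝ, mellin (Stmt18.f s) ((c : ℂ) + y * Complex.I))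
      = (1 / (2 * (Real.pi : ℂ))) * ∫ y : ℝ, mellin (Stmt18.f s) ((c : ℂ) + y * Complex.I) := by
    rw [Complex.real_smul]
    push_cast
    ring
  rw [← hsmul, hinv]
  rw [Stmt18.f, Stmt18.F_eq hs one_pos, Complex.ofReal_tsum]
  refine tsum_congr fun j => ?_
  rw [Stmt18.q, mul_one]
  push_cast
  ring
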